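/- For every α ∈ (0,1), lim_{s→0⁺} ℓ^α(s) = √(−2 ln α), where ℓ^α(s) is the unique solution in ℓ of J(s,ℓ) = α. -/

import Mathlib

open Real Set Filter Topology

noncomputable def Phi (x : ℝ) : ℝ :=
  (Real.sqrt (2 * Real.pi))⁻¹ * ∫ y in Set.Iic x, Real.exp (-y ^ 2 / 2)

noncomputable def J (s ℓ : ℝ) : ℝ :=
  Phi (-ℓ / (2 * Real.sqrt s)) +
    Real.exp (ℓ ^ 2 * (s - 1) / 2) * Phi (ℓ * (1 / (2 * Real.sqrt s) - Real.sqrt s))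

section Aux

open MeasureTheory intervalIntegral

lemma g_integrable : Integrable (fun y : ℝ => Real.exp (-y ^ 2 / 2)) := by
  have := integrable_exp_neg_mul_sq (by norm_num : (0:ℝ) < 1/2)
  convert this using 2 with y
  ring_nf

lemma g_total : (∫ y : ℝ, Real.exp (-y ^ 2 / 2)) = Real.sqrt (2 * Real.pi) := by
  have := integral_gaussian (1/2 : ℝ)
  rw [show Real.sqrt (π / (1/2)) = Real.sqrt (2 * π) by
    rw [div_div_eq_mul_div, div_one, mul_comm]] at this
  rw [← this]; congr 1 with y; ring_nf

lemma sqrt_two_pi_pos : 0 < Real.sqrt (2 * Real.pi) :=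
  Real.sqrt_pos.mpr (by positivity)

lemma Phi_pos (x : ℝ) : 0 < Phi x := by
  apply mul_pos (inv_pos.mpr sqrt_two_pi_pos)
  rw [setIntegral_pos_iff_support_of_nonneg_ae]
  · have : Function.support (fun y : ℝ => Real.exp (-y ^ 2 / 2)) = univ := by
      ext y; simp [Function.mem_support, (Real.exp_pos _).ne']
    rw [this, univ_inter]
    simp [Real.volume_Iic]
  · filter_upwards with y using (Real.exp_pos _).le
  · exact g_integrable.integrableOn

lemma Phi_atTop : Tendsto Phi atTop (𝓝 1) := by
  have hc : AECover (volume : Measure ℝ) atTop (fun x : ℝ => Iic x) :=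
    aecover_Iic tendsto_id
  have h := hc.integral_tendsto_of_countably_generated g_integrable
  rw [g_total] at h
  have h2 := h.const_mul (Real.sqrt (2 * Real.pi))⁻¹
  rw [inv_mul_cancel₀ sqrt_two_pi_pos.ne'] at h2
  exact h2.congr (fun x => by rw [Phi, mul_comm])

lemma Phi_atBot : Tendsto Phi atBot (𝓝 0) := by
  have hc : AECover (volume : Measure ℝ) atBot (fun x : ℝ => Ioi x) :=
    aecover_Ioi tendsto_id
  have h := hc.integral_tendsto_of_countably_generated g_integrable
  rw [g_total] at h
  have key : ∀ x : ℝ, Phi x = (Real.sqrt (2 * Real.pi))⁻¹ *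
      (Real.sqrt (2 * Real.pi) - ∫ y in Set.Ioi x, Real.exp (-y ^ 2 / 2)) := by
    intro x
    have := integral_Iic_add_Ioi (b := x) g_integrable.integrableOn g_integrable.integrableOn
    rw [Phi]
    congr 1
    have h2 : (∫ y : ℝ, Real.exp (-y ^ 2 / 2) ∂(volume : Measure ℝ))
        = Real.sqrt (2 * Real.pi) := g_total
    linarith [this, h2]
  have hlim : Tendsto (fun x : ℝ => (Real.sqrt (2 * Real.pi))⁻¹ *
      (Real.sqrt (2 * Real.pi) - ∫ y in Set.Ioi x, Real.exp (-y ^ 2 / 2))) atBot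
      (𝓝 ((Real.sqrt (2 * Real.pi))⁻¹ * (Real.sqrt (2 * Real.pi) - Real.sqrt (2 * Real.pi)))) :=
    (tendsto_const_nhds.sub h).const_mul _
  simp only [sub_self, mul_zero] at hlim
  exact Tendsto.congr (fun x => (key x).symm) hlim

lemma hasDerivAt_Phi (x : ℝ) :
    HasDerivAt Phi ((Real.sqrt (2 * Real.pi))⁻¹ * Real.exp (-x ^ 2 / 2)) x := by
  have hF : ∀ z : ℝ, Phi z = (Real.sqrt (2 * Real.pi))⁻¹ *
      ((∫ y in Set.Iic (0:ℝ), Real.exp (-y ^ 2 / 2)) + ∫ y in (0:ℝ)..z, Real.exp (-y ^ 2 / 2)) := by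
    intro z
    rw [Phi]
    congr 1
    have := integral_Iic_sub_Iic (a := (0:ℝ)) (b := z)
      g_integrable.integrableOn g_integrable.integrableOn
    linarith [this]
  have hder : HasDerivAt (fun z => ∫ y in (0:ℝ)..z, Real.exp (-y ^ 2 / 2))
      (Real.exp (-x ^ 2 / 2)) x := by
    refine intervalIntegral.integral_hasDerivAt_right
      ((by continuity : Continuous fun y : ℝ => Real.exp (-y^2/2)).intervalIntegrable _ _)
      ?_ (by fun_prop)
    exact ((by continuity : Continuous fun y : ℝ =>
      Real.exp (-y^2/2)).stronglyMeasurable).stronglyMeasurableAtFilter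
  have h3 := ((hasDerivAt_const x (∫ y in Set.Iic (0:ℝ), Real.exp (-y ^ 2 / 2))).add
    hder).const_mul (Real.sqrt (2 * Real.pi))⁻¹
  rw [zero_add] at h3
  exact h3.congr_of_eventuallyEq (by filter_upwards with z; rw [hF z]; rfl)

lemma hasDerivAt_J {s : ℝ} (hs : 0 < s) (ℓ : ℝ) :
    HasDerivAt (fun l => J s l)
      ((s - 1) * ℓ * Real.exp (ℓ ^ 2 * (s - 1) / 2) *
          Phi (ℓ * (1 / (2 * Real.sqrt s) - Real.sqrt s)) -
        Real.sqrt s * ((Real.sqrt (2 * Real.pi))⁻¹ *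
          Real.exp (-(ℓ / (2 * Real.sqrt s)) ^ 2 / 2))) ℓ := by
  have ht : (0:ℝ) < Real.sqrt s := Real.sqrt_pos.mpr hs
  have ht2 : Real.sqrt s ^ 2 = s := Real.sq_sqrt hs.le
  set t := Real.sqrt s with htdef
  have h1 : HasDerivAt (fun l : ℝ => -l / (2 * t)) (-1 / (2 * t)) ℓ :=
    (hasDerivAt_id ℓ).neg.div_const _
  have h2 : HasDerivAt (fun l : ℝ => Phi (-l / (2 * t)))
      ((Real.sqrt (2 * Real.pi))⁻¹ * Real.exp (-(-ℓ / (2 * t)) ^ 2 / 2) * (-1 / (2 * t))) ℓ :=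
    (hasDerivAt_Phi _).comp ℓ h1
  have h3 : HasDerivAt (fun l : ℝ => l ^ 2 * (s - 1) / 2) (ℓ * (s - 1)) ℓ := by
    have := ((hasDerivAt_pow 2 ℓ).mul_const (s - 1)).div_const 2
    refine this.congr_deriv ?_; push_cast; ring
  have h4 : HasDerivAt (fun l : ℝ => Real.exp (l ^ 2 * (s - 1) / 2))
      (Real.exp (ℓ ^ 2 * (s - 1) / 2) * (ℓ * (s - 1))) ℓ := h3.exp
  have h5 : HasDerivAt (fun l : ℝ => l * (1 / (2 * t) - t)) (1 / (2 * t) - t) ℓ :=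
    hasDerivAt_mul_const _
  have h6 : HasDerivAt (fun l : ℝ => Phi (l * (1 / (2 * t) - t)))
      ((Real.sqrt (2 * Real.pi))⁻¹ * Real.exp (-(ℓ * (1 / (2 * t) - t)) ^ 2 / 2) *
        (1 / (2 * t) - t)) ℓ :=
    (hasDerivAt_Phi _).comp ℓ h5
  have hsum := h2.add (h4.mul h6)
  have hJ : (fun l => J s l) = fun l : ℝ =>
      Phi (-l / (2 * t)) + Real.exp (l ^ 2 * (s - 1) / 2) * Phi (l * (1 / (2 * t) - t)) := rfl
  rw [hJ]
  refine hsum.congr_deriv ?_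
  have hexp : Real.exp (ℓ ^ 2 * (s - 1) / 2) * Real.exp (-(ℓ * (1 / (2 * t) - t)) ^ 2 / 2)
      = Real.exp (-(ℓ / (2 * t)) ^ 2 / 2) := by
    rw [← Real.exp_add]
    congr 1
    have : s = t ^ 2 := ht2.symm
    rw [this]
    field_simp
    ring
  have hsq : (-(ℓ / (2 * t))) ^ 2 = (ℓ / (2 * t)) ^ 2 := by ring
  have expand : Real.exp (ℓ ^ 2 * (s - 1) / 2) *
      ((Real.sqrt (2 * Real.pi))⁻¹ * Real.exp (-(ℓ * (1 / (2 * t) - t)) ^ 2 / 2) *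
        (1 / (2 * t) - t))
      = (Real.sqrt (2 * Real.pi))⁻¹ * Real.exp (-(ℓ / (2 * t)) ^ 2 / 2) * (1 / (2 * t) - t) := by
    rw [← hexp]; ring
  have expand2 : (Real.sqrt (2 * Real.pi))⁻¹ * Real.exp (-(-ℓ / (2 * t)) ^ 2 / 2) * (-1 / (2 * t))
      = (Real.sqrt (2 * Real.pi))⁻¹ * Real.exp (-(ℓ / (2 * t)) ^ 2 / 2) * (-1 / (2 * t)) := by
    rw [show (-ℓ / (2*t)) = -(ℓ/(2*t)) by ring, hsq]
  rw [expand2, expand]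
  field_simp
  ring

lemma deriv_J_neg {s ℓ : ℝ} (hs : 0 < s) (hs1 : s < 1) (hl : 0 < ℓ) :
    deriv (fun l => J s l) ℓ < 0 := by
  rw [(hasDerivAt_J hs ℓ).deriv]
  have h1 : (s - 1) * ℓ * Real.exp (ℓ ^ 2 * (s - 1) / 2) *
      Phi (ℓ * (1 / (2 * Real.sqrt s) - Real.sqrt s)) < 0 := by
    apply mul_neg_of_neg_of_pos _ (Phi_pos _)
    apply mul_neg_of_neg_of_pos _ (Real.exp_pos _)
    exact mul_neg_of_neg_of_pos (by linarith) hl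
  have h2 : 0 < Real.sqrt s * ((Real.sqrt (2 * Real.pi))⁻¹ *
      Real.exp (-(ℓ / (2 * Real.sqrt s)) ^ 2 / 2)) := by positivity
  linarith

lemma J_strictAntiOn {s : ℝ} (hs : 0 < s) (hs1 : s < 1) :
    StrictAntiOn (fun l => J s l) (Ici (0:ℝ)) := by
  apply strictAntiOn_of_deriv_neg (convex_Ici 0)
  · exact Continuous.continuousOn
      (continuous_iff_continuousAt.mpr fun l => (hasDerivAt_J hs l).continuousAt)
  · intro x hx
    rw [interior_Ici] at hx
    exact deriv_J_neg hs hs1 hx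

lemma sqrt_tendsto : Tendsto (fun s : ℝ => Real.sqrt s) (𝓝[>] 0) (𝓝[>] 0) := by
  rw [tendsto_nhdsWithin_iff]
  constructor
  · have : Tendsto Real.sqrt (𝓝 0) (𝓝 0) := by
      simpa using Real.continuous_sqrt.tendsto 0
    exact this.mono_left nhdsWithin_le_nhds
  · filter_upwards [self_mem_nhdsWithin] with s hs
    exact Real.sqrt_pos.mpr hs

lemma inv_two_sqrt_tendsto : Tendsto (fun s : ℝ => (2 * Real.sqrt s)⁻¹) (𝓝[>] 0) atTop := by
  apply tendsto_inv_nhdsGT_zero.comp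
  rw [tendsto_nhdsWithin_iff]
  constructor
  · have h2 := (sqrt_tendsto.mono_right nhdsWithin_le_nhds).const_mul (2:ℝ)
    simpa using h2
  · filter_upwards [self_mem_nhdsWithin] with s hs
    have := Real.sqrt_pos.mpr hs
    exact mem_Ioi.mpr (by positivity)

lemma J_limit {ℓ : ℝ} (hl : 0 < ℓ) :
    Tendsto (fun s => J s ℓ) (𝓝[>] 0) (𝓝 (Real.exp (-ℓ ^ 2 / 2))) := by
  have h1 : Tendsto (fun s : ℝ => ℓ * (2 * Real.sqrt s)⁻¹) (𝓝[>] 0) atTop :=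
    inv_two_sqrt_tendsto.const_mul_atTop hl
  have hbot : Tendsto (fun s : ℝ => -ℓ / (2 * Real.sqrt s)) (𝓝[>] 0) atBot := by
    have h2 := tendsto_neg_atTop_atBot.comp h1
    refine h2.congr fun s => ?_
    simp only [Function.comp]
    field_simp
  have htop : Tendsto (fun s : ℝ => ℓ * (1 / (2 * Real.sqrt s) - Real.sqrt s)) (𝓝[>] 0) atTop := by
    refine tendsto_atTop_mono' _ ?_ (tendsto_atTop_add_const_right _ (-ℓ) h1)
    filter_upwards [Ioo_mem_nhdsGT_of_mem (Set.left_mem_Ico.mpr zero_lt_one)] with s hs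
    have hsq : Real.sqrt s ≤ 1 := by
      rw [show (1:ℝ) = Real.sqrt 1 by simp]
      exact Real.sqrt_le_sqrt hs.2.le
    have : ℓ * Real.sqrt s ≤ ℓ * 1 := by nlinarith
    have h1d : (1 : ℝ) / (2 * Real.sqrt s) = (2 * Real.sqrt s)⁻¹ := one_div _
    nlinarith [this]
  have hterm1 : Tendsto (fun s : ℝ => Phi (-ℓ / (2 * Real.sqrt s))) (𝓝[>] 0) (𝓝 0) :=
    Phi_atBot.comp hbot
  have hexp : Tendsto (fun s : ℝ => Real.exp (ℓ ^ 2 * (s - 1) / 2)) (𝓝[>] 0)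
      (𝓝 (Real.exp (-ℓ ^ 2 / 2))) := by
    have hc : Continuous fun s : ℝ => Real.exp (ℓ ^ 2 * (s - 1) / 2) := by continuity
    have h0 : Tendsto (fun s : ℝ => Real.exp (ℓ ^ 2 * (s - 1) / 2)) (𝓝[>] 0)
        (𝓝 (Real.exp (ℓ ^ 2 * ((0:ℝ) - 1) / 2))) :=
      (hc.tendsto 0).mono_left nhdsWithin_le_nhds
    convert h0 using 2
    ring_nf
  have hterm2 : Tendsto (fun s : ℝ => Phi (ℓ * (1 / (2 * Real.sqrt s) - Real.sqrt s)))
      (𝓝[>] 0) (𝓝 1) := Phi_atTop.comp htop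
  have hfin := hterm1.add (hexp.mul hterm2)
  rw [zero_add, mul_one] at hfin
  exact hfin.congr fun s => rfl

end Aux

/-- If `ℓα(s)` is the (unique) positive root of `J(s,·) = α`, then
`ℓα(s) → √(−2 ln α)` as `s → 0⁺`. -/
theorem lalpha_tendsto_zero (α : ℝ) (hα : α ∈ Set.Ioo (0 : ℝ) 1)
    (ℓα : ℝ → ℝ) (hroot : ∀ s : ℝ, 0 < s → 0 < ℓα s ∧ J s (ℓα s) = α) :
    Tendsto ℓα (𝓝[>] 0) (𝓝 (Real.sqrt (-2 * Real.log α))) := by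
  obtain ⟨hα0, hα1⟩ := hα
  have hlog : Real.log α < 0 := Real.log_neg hα0 hα1
  set L : ℝ := Real.sqrt (-2 * Real.log α) with hLdef
  have hLpos : 0 < L := Real.sqrt_pos.mpr (by linarith)
  have hL2 : L ^ 2 = -2 * Real.log α := Real.sq_sqrt (by linarith)
  have hexpL : Real.exp (-L ^ 2 / 2) = α := by
    rw [hL2, show -(-2 * Real.log α) / 2 = Real.log α by ring, Real.exp_log hα0]
  rw [Metric.tendsto_nhds]
  intro ε hε
  set e : ℝ := min (ε / 2) (L / 2) with hedef
  have he : 0 < e := lt_min (by linarith) (by linarith)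
  have heL : e < L := lt_of_le_of_lt (min_le_right _ _) (by linarith)
  have heε : e < ε := lt_of_le_of_lt (min_le_left _ _) (by linarith)
  set a : ℝ := L - e with hadef
  set b : ℝ := L + e with hbdef
  have ha : 0 < a := by simp only [hadef]; linarith
  have hb : 0 < b := by simp only [hbdef]; linarith
  have haL : α < Real.exp (-a ^ 2 / 2) := by
    rw [← hexpL]
    apply Real.exp_lt_exp.mpr
    nlinarith
  have hbL : Real.exp (-b ^ 2 / 2) < α := by
    rw [← hexpL]
    apply Real.exp_lt_exp.mpr
    nlinarith
  have hEa : ∀ᶠ s in 𝓝[>] (0:ℝ), α < J s a :=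
    (J_limit ha).eventually (eventually_gt_nhds haL)
  have hEb : ∀ᶠ s in 𝓝[>] (0:ℝ), J s b < α :=
    (J_limit hb).eventually (eventually_lt_nhds hbL)
  filter_upwards [hEa, hEb, Ioo_mem_nhdsGT_of_mem (Set.left_mem_Ico.mpr zero_lt_one),
    self_mem_nhdsWithin] with s hsa hsb hs01 hs0
  have hs0' : (0:ℝ) < s := hs0
  obtain ⟨hlpos, hJeq⟩ := hroot s hs0'
  have hanti := J_strictAntiOn hs0' hs01.2
  have hmema : a ∈ Ici (0:ℝ) := le_of_lt ha
  have hmemb : b ∈ Ici (0:ℝ) := le_of_lt hb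
  have hmeml : ℓα s ∈ Ici (0:ℝ) := le_of_lt hlpos
  -- a < ℓα s
  have h1 : a < ℓα s := by
    by_contra h
    push_neg at h
    rcases eq_or_lt_of_le h with h' | h'
    · rw [h'] at hJeq; linarith
    · have := hanti hmeml hmema h'
      simp only at this
      rw [hJeq] at this
      linarith
  have h2 : ℓα s < b := by
    by_contra h
    push_neg at h
    rcases eq_or_lt_of_le h with h' | h'
    · rw [← h'] at hJeq; linarith
    · have := hanti hmemb hmeml h'
      simp only at this
      rw [hJeq] at this
      linarith
  rw [Real.dist_eq, abs_sub_lt_iff]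
  constructor <;> [skip; skip] <;> simp only [hadef, hbdef] at h1 h2 <;> linarith
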